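/- Let h(z) = ∑_{k=0}^∞ a_k z^k and g(z) = ∑_{k=0}^∞ b_k z^k be analytic functions on the unit disk 𝔻 satisfying |h(z)| + |g(z)| ≤ 1 for all z ∈ 𝔻, and suppose g(0) = 0 (i.e., b_0 = 0). Then |a_0| + ∑_{k=1}^∞ (|a_k| + |b_k|) r^k ≤ 1 for all r with 0 ≤ r ≤ 1/3. -/

import Mathlib

open Metric Set Finset FormalMultilinearSeries

private lemma psOf_hasFPS (c : ℕ → ℂ) (F : ℂ → ℂ)
    (hc : ∀ z : ℂ, ‖z‖ < 1 → HasSum (fun n => c n * z ^ n) (F z)) :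
    HasFPowerSeriesOnBall F (ofScalars ℂ c) 0 1 := by
  constructor
  · refine ENNReal.le_of_forall_nnreal_lt fun s hs => ?_
    have hs1 : (s : ℝ) < 1 := by exact_mod_cast hs
    have hz : ‖((s : ℝ) : ℂ)‖ < 1 := by
      simpa [abs_of_nonneg s.coe_nonneg] using hs1
    have hsum := (hc _ hz).summable
    have htend : Filter.Tendsto (fun n => ‖ofScalars ℂ c n‖ * (s : ℝ) ^ n) Filter.atTop (nhds 0) := by
      have h2 : Filter.Tendsto (fun n => ‖c n * ((s : ℝ) : ℂ) ^ n‖) Filter.atTop (nhds 0) := by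
        simpa using hsum.tendsto_atTop_zero.norm
      refine h2.congr fun n => ?_
      rw [ofScalars_norm, norm_mul, norm_pow, Complex.norm_real, Real.norm_eq_abs,
        abs_of_nonneg s.coe_nonneg]
    exact (ofScalars ℂ c).le_radius_of_tendsto htend
  · exact one_pos
  · intro y hy
    rw [EMetric.mem_ball, edist_zero_right] at hy
    have hy' : ‖y‖ < 1 := by
      simpa [← ENNReal.coe_one, ENNReal.coe_lt_coe, ← NNReal.coe_lt_coe] using hy
    refine HasSum.congr_fun (by simpa using hc y hy') fun n => ?_
    rw [ofScalars_apply_eq]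
    simp [smul_eq_mul, mul_comm]

open ComplexConjugate in
private lemma coeff_one_bound (c : ℕ → ℂ) (F : ℂ → ℂ)
    (hc : ∀ z : ℂ, ‖z‖ < 1 → HasSum (fun n => c n * z ^ n) (F z))
    (hF : ∀ z : ℂ, ‖z‖ < 1 → ‖F z‖ ≤ 1) : ‖c 1‖ ≤ 1 - ‖c 0‖ ^ 2 := by
  have hp := psOf_hasFPS c F hc
  have hball : Metric.eball (0:ℂ) 1 = ball (0:ℂ) 1 := by
    rw [← ENNReal.coe_one, Metric.emetric_ball_nnreal, NNReal.coe_one]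
  have hdiff : DifferentiableOn ℂ F (ball 0 1) := by
    have := hp.differentiableOn; rwa [hball] at this
  have hdF : HasDerivAt F (c 1) 0 := by
    have := hp.hasFPowerSeriesAt.hasDerivAt
    rwa [FormalMultilinearSeries.ofScalars_apply_eq, one_pow, smul_eq_mul, mul_one] at this
  have hF0 : F 0 = c 0 := by
    have h1 : HasSum (fun n => c n * (0:ℂ) ^ n) (c 0) := by
      have := hasSum_single (f := fun n => c n * (0:ℂ) ^ n) 0
        (fun b hb => by simp [zero_pow hb])
      simpa using this
    exact (hc 0 (by norm_num)).unique h1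
  have hc0le : ‖c 0‖ ≤ 1 := hF0 ▸ hF 0 (by norm_num)
  rcases eq_or_lt_of_le hc0le with h1 | h1
  · have hmax : IsMaxOn (norm ∘ F) (ball 0 1) 0 := by
      intro z hz
      simp only [Function.comp_apply, hF0]
      calc ‖F z‖ ≤ 1 := hF z (by simpa using hz)
        _ = ‖c 0‖ := h1.symm
    have heq := Complex.eqOn_of_isPreconnected_of_isMaxOn_norm
      (convex_ball (0:ℂ) 1).isPreconnected isOpen_ball hdiff (mem_ball_self one_pos) hmax
    have hev : F =ᶠ[nhds 0] fun _ => F 0 :=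
      Filter.eventuallyEq_of_mem (isOpen_ball.mem_nhds (mem_ball_self one_pos)) heq
    have : deriv F 0 = 0 := by rw [hev.deriv_eq, deriv_const]
    rw [hdF.deriv] at this
    rw [this, norm_zero, h1]
    norm_num
  · set α := c 0 with hα
    have habs1 : ‖α‖ < 1 := by exact h1
    have hnsq : Complex.normSq α < 1 := by
      rw [Complex.normSq_eq_norm_sq]
      nlinarith [norm_nonneg α]
    set G : ℂ → ℂ := fun z => (F z - α) / (1 - conj α * F z) with hG
    have hden : ∀ z : ℂ, ‖z‖ < 1 → (1 - conj α * F z) ≠ 0 := by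
      intro z hz hzero
      have : ‖conj α * F z‖ < 1 := by
        rw [norm_mul]
        calc ‖conj α‖ * ‖F z‖ ≤ ‖conj α‖ * 1 :=
              mul_le_mul_of_nonneg_left (hF z hz) (norm_nonneg _)
          _ = ‖α‖ := by rw [mul_one, RCLike.norm_conj]
          _ < 1 := h1
      rw [sub_eq_zero] at hzero
      rw [← hzero] at this
      simp at this
    have hGnorm : ∀ z : ℂ, ‖z‖ < 1 → ‖G z‖ ≤ 1 := by
      intro z hz
      have hw := hF z hz
      have hkey : Complex.normSq (F z - α) + (1 - Complex.normSq α) * (1 - Complex.normSq (F z))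
          = Complex.normSq (1 - conj α * F z) := by
        simp only [Complex.normSq_apply, Complex.sub_re, Complex.sub_im, Complex.mul_re,
          Complex.mul_im, Complex.one_re, Complex.one_im, Complex.conj_re, Complex.conj_im]
        ring
      have hwsq : Complex.normSq (F z) ≤ 1 := by
        rw [Complex.normSq_eq_norm_sq]
        calc ‖F z‖^2 ≤ 1^2 := by
              apply pow_le_pow_left₀ (norm_nonneg _) hw
          _ = 1 := one_pow 2
      have hle : Complex.normSq (F z - α) ≤ Complex.normSq (1 - conj α * F z) := by
        nlinarith [Complex.normSq_nonneg α]
      have habs : ‖F z - α‖ ≤ ‖1 - conj α * F z‖ := by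
        rw [Complex.norm_def, Complex.norm_def]
        exact Real.sqrt_le_sqrt hle
      rw [hG]
      simp only [norm_div]
      rw [div_le_one (norm_pos_iff.mpr (hden z hz))]
      exact habs
    have hG0 : G 0 = 0 := by rw [hG]; simp [hF0]
    have hGdiff : DifferentiableOn ℂ G (ball 0 1) := by
      apply DifferentiableOn.div
      · exact hdiff.sub (differentiableOn_const α)
      · exact (differentiableOn_const 1).sub ((differentiableOn_const (conj α)).mul hdiff)
      · intro z hz; exact hden z (by simpa using hz)
    have hv0 : (1 - conj α * F 0) = 1 - (Complex.normSq α : ℂ) := by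
      rw [hF0, Complex.normSq_eq_conj_mul_self]
    have hv0ne : (1 : ℂ) - (Complex.normSq α : ℂ) ≠ 0 := by
      intro hzero
      rw [sub_eq_zero] at hzero
      have : (Complex.normSq α : ℂ) = 1 := hzero.symm
      have : Complex.normSq α = 1 := by exact_mod_cast this
      linarith
    have hGd : HasDerivAt G (c 1 / (1 - (Complex.normSq α : ℂ))) 0 := by
      have hu : HasDerivAt (fun z => F z - α) (c 1) 0 := hdF.sub_const α
      have hv : HasDerivAt (fun z => 1 - conj α * F z) (-(conj α * c 1)) 0 := by
        simpa using ((hdF.const_mul (conj α)).const_sub 1)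
      have := hu.div hv (by rw [hv0]; exact hv0ne)
      convert this using 1
      case e'_4 => rfl
      case e'_5 => rfl
      case e'_8 => rfl
      have hne : (1:ℂ) - conj α * α ≠ 0 := by
        rw [← Complex.normSq_eq_conj_mul_self]; exact hv0ne
      rw [hF0, Complex.normSq_eq_conj_mul_self]
      field_simp
      ring
    have hschwarz : ∀ ε : ℝ, 0 < ε → ‖c 1 / (1 - (Complex.normSq α : ℂ))‖ ≤ 1 + ε := by
      intro ε hε
      have hmaps : MapsTo G (ball 0 1) (ball (G 0) (1 + ε)) := by
        intro z hz
        rw [hG0, mem_ball, dist_zero_right]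
        calc ‖G z‖ ≤ 1 := hGnorm z (by simpa using hz)
          _ < 1 + ε := by linarith
      have := Complex.norm_deriv_le_div_of_mapsTo_ball hGdiff (hmaps.mono_right ball_subset_closedBall) one_pos
      rw [hGd.deriv] at this
      simpa using this
    have hfinal : ‖c 1 / (1 - (Complex.normSq α : ℂ))‖ ≤ 1 :=
      le_of_forall_pos_le_add fun ε hε => hschwarz ε hε
    have hnormden : ‖(1 : ℂ) - (Complex.normSq α : ℂ)‖ = 1 - Complex.normSq α := by
      rw [show (1 : ℂ) - (Complex.normSq α : ℂ) = ((1 - Complex.normSq α : ℝ) : ℂ) by push_cast; ring]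
      rw [Complex.norm_real, Real.norm_eq_abs, abs_of_pos (by linarith)]
    rw [norm_div, hnormden, div_le_one (by linarith)] at hfinal
    calc ‖c 1‖ ≤ 1 - Complex.normSq α := hfinal
      _ = 1 - ‖c 0‖ ^ 2 := by rw [← hα, Complex.normSq_eq_norm_sq]

private lemma exists_kth_root (k : ℕ) (hk : 1 ≤ k) (w : ℂ) (hw : ‖w‖ < 1) :
    ∃ z : ℂ, ‖z‖ < 1 ∧ z ^ k = w := by
  rcases eq_or_ne w 0 with rfl | hw0
  · exact ⟨0, by norm_num, by rw [zero_pow (by omega)]⟩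
  · set t : ℝ := (k : ℝ)⁻¹ with ht
    have htpos : 0 < t := by positivity
    refine ⟨Complex.exp ((t : ℂ) * Complex.log w), ?_, ?_⟩
    · rw [Complex.norm_exp]
      have hre : ((t : ℂ) * Complex.log w).re = t * Real.log ‖w‖ := by
        rw [Complex.re_ofReal_mul, Complex.log_re]
      rw [hre]
      apply Real.exp_lt_one_iff.mpr
      have : Real.log ‖w‖ < 0 :=
        Real.log_neg (norm_pos_iff.mpr hw0) hw
      nlinarith
    · rw [← Complex.exp_nat_mul]
      have : (k : ℂ) * ((t : ℂ) * Complex.log w) = Complex.log w := by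
        rw [ht]
        push_cast
        rw [← mul_assoc, mul_inv_cancel₀ (Nat.cast_ne_zero.mpr (by omega : k ≠ 0)), one_mul]
      rw [this, Complex.exp_log hw0]

private lemma roots_sum_eq (k : ℕ) (hk : 1 ≤ k) (n : ℕ) :
    (∑ j ∈ range k, (Complex.exp (2 * Real.pi * Complex.I / k) ^ n) ^ j)
      = if k ∣ n then (k : ℂ) else 0 := by
  set ω := Complex.exp (2 * Real.pi * Complex.I / k) with hω
  have hprim : IsPrimitiveRoot ω k := Complex.isPrimitiveRoot_exp k (by omega)
  by_cases hdvd : k ∣ n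
  · rw [if_pos hdvd, (hprim.pow_eq_one_iff_dvd n).mpr hdvd]
    simp
  · rw [if_neg hdvd]
    have hne : ω ^ n ≠ 1 := fun h => hdvd ((hprim.pow_eq_one_iff_dvd n).mp h)
    rw [geom_sum_eq hne]
    have : (ω ^ n) ^ k = 1 := by
      rw [← pow_mul, mul_comm, pow_mul, hprim.pow_eq_one, one_pow]
    rw [this, sub_self, zero_div]

private lemma averaging_hasSum (c : ℕ → ℂ) (F : ℂ → ℂ)
    (hc : ∀ z : ℂ, ‖z‖ < 1 → HasSum (fun n => c n * z ^ n) (F z))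
    (k : ℕ) (hk : 1 ≤ k) (z : ℂ) (hz : ‖z‖ < 1) :
    HasSum (fun m => c (k * m) * (z ^ k) ^ m)
      ((k : ℂ)⁻¹ * ∑ j ∈ range k, F (Complex.exp (2 * Real.pi * Complex.I / k) ^ j * z)) := by
  set ω := Complex.exp (2 * Real.pi * Complex.I / k) with hω
  have hωnorm : ‖ω‖ = 1 := by
    rw [hω, Complex.norm_exp]
    have : (2 * (Real.pi : ℂ) * Complex.I / k).re = 0 := by
      rw [show 2 * (Real.pi : ℂ) * Complex.I / k = ((2 * Real.pi / k : ℝ) : ℂ) * Complex.I by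
        push_cast; ring]
      simp
    rw [this, Real.exp_zero]
  have hj : ∀ j ∈ range k, HasSum (fun n => c n * (ω ^ j * z) ^ n) (F (ω ^ j * z)) := by
    intro j _
    apply hc
    rw [norm_mul, norm_pow, hωnorm, one_pow, one_mul]
    exact hz
  have hsum := hasSum_sum hj
  have hsum2 : HasSum (fun n => c n * z ^ n * (if k ∣ n then (k : ℂ) else 0))
      (∑ j ∈ range k, F (ω ^ j * z)) := by
    refine hsum.congr_fun fun n => ?_
    rw [← roots_sum_eq k hk n, Finset.mul_sum]
    refine Finset.sum_congr rfl fun j _ => ?_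
    rw [hω, mul_pow, ← pow_mul, Nat.mul_comm n j, pow_mul]
    ring
  have hinj : Function.Injective (fun m : ℕ => k * m) :=
    fun m₁ m₂ h => Nat.eq_of_mul_eq_mul_left (by omega) h
  have hsupp : ∀ x ∉ Set.range (fun m : ℕ => k * m),
      c x * z ^ x * (if k ∣ x then (k : ℂ) else 0) = 0 := by
    intro x hx
    have : ¬ k ∣ x := by
      intro ⟨m, hm⟩
      exact hx ⟨m, hm.symm⟩
    rw [if_neg this, mul_zero]
  have hsum3 := (hinj.hasSum_iff hsupp).mpr hsum2
  have hsum4 : HasSum (fun m => (k : ℂ) * (c (k * m) * (z ^ k) ^ m))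
      (∑ j ∈ range k, F (ω ^ j * z)) := by
    refine hsum3.congr_fun fun m => ?_
    simp only [Function.comp_apply]
    rw [if_pos ⟨m, rfl⟩, ← pow_mul]
    ring
  have := hsum4.mul_left (k : ℂ)⁻¹
  refine this.congr_fun fun m => ?_
  rw [← mul_assoc, inv_mul_cancel₀ (Nat.cast_ne_zero.mpr (by omega : k ≠ 0)), one_mul]

private lemma coeff_bound (c : ℕ → ℂ) (F : ℂ → ℂ)
    (hc : ∀ z : ℂ, ‖z‖ < 1 → HasSum (fun n => c n * z ^ n) (F z))
    (hF : ∀ z : ℂ, ‖z‖ < 1 → ‖F z‖ ≤ 1)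
    (k : ℕ) (hk : 1 ≤ k) : ‖c k‖ ≤ 1 - ‖c 0‖ ^ 2 := by
  set d : ℕ → ℂ := fun m => c (k * m) with hd
  set H : ℂ → ℂ := fun w => ∑' m, d m * w ^ m with hH
  have key : ∀ w : ℂ, ‖w‖ < 1 → HasSum (fun m => d m * w ^ m) (H w) ∧ ‖H w‖ ≤ 1 := by
    intro w hw
    obtain ⟨z, hz, rfl⟩ := exists_kth_root k hk w hw
    have h1 := averaging_hasSum c F hc k hk z hz
    have hsum : HasSum (fun m => d m * (z ^ k) ^ m) (H (z ^ k)) := h1.summable.hasSum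
    refine ⟨hsum, ?_⟩
    rw [hsum.unique h1, norm_mul]
    have hωnorm : ∀ j : ℕ, ‖Complex.exp (2 * Real.pi * Complex.I / k) ^ j * z‖ < 1 := by
      intro j
      rw [norm_mul, norm_pow, Complex.norm_exp]
      have : (2 * (Real.pi : ℂ) * Complex.I / k).re = 0 := by
        rw [show 2 * (Real.pi : ℂ) * Complex.I / k = ((2 * Real.pi / k : ℝ) : ℂ) * Complex.I by
          push_cast; ring]
        simp
      rw [this, Real.exp_zero, one_pow, one_mul]
      exact hz
    have hsumnorm : ‖∑ j ∈ range k, F (Complex.exp (2 * Real.pi * Complex.I / k) ^ j * z)‖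
        ≤ (k : ℝ) := by
      calc ‖∑ j ∈ range k, F (Complex.exp (2 * Real.pi * Complex.I / k) ^ j * z)‖
          ≤ ∑ j ∈ range k, ‖F (Complex.exp (2 * Real.pi * Complex.I / k) ^ j * z)‖ :=
            norm_sum_le _ _
        _ ≤ ∑ _j ∈ range k, (1 : ℝ) := by
            apply Finset.sum_le_sum
            intro j _
            exact hF _ (hωnorm j)
        _ = (k : ℝ) := by simp
    have hknorm : ‖((k : ℂ))⁻¹‖ = (k : ℝ)⁻¹ := by
      rw [norm_inv, Complex.norm_natCast]
    rw [hknorm]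
    calc (k : ℝ)⁻¹ * ‖∑ j ∈ range k, F (Complex.exp (2 * Real.pi * Complex.I / k) ^ j * z)‖
        ≤ (k : ℝ)⁻¹ * (k : ℝ) := by
          apply mul_le_mul_of_nonneg_left hsumnorm (by positivity)
      _ = 1 := inv_mul_cancel₀ (by exact_mod_cast (by omega : k ≠ 0))
  have := coeff_one_bound d H (fun z hz => (key z hz).1) (fun z hz => (key z hz).2)
  simpa [hd] using this

/-- Proposition 1 of Kayumov–Ponnusamy: if `h, g` are analytic on the unit disk with
`|h| + |g| ≤ 1` and `g(0) = 0`, then `|a₀| + ∑_{k≥1} (|aₖ| + |bₖ|) rᵏ ≤ 1` for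
`r ≤ 1/3`. -/
theorem bohr_pair_inequality
    (a b : ℕ → ℂ) (h g : ℂ → ℂ)
    (hh : ∀ z : ℂ, ‖z‖ < 1 → HasSum (fun k : ℕ => a k * z ^ k) (h z))
    (hg : ∀ z : ℂ, ‖z‖ < 1 → HasSum (fun k : ℕ => b k * z ^ k) (g z))
    (hbound : ∀ z : ℂ, ‖z‖ < 1 → ‖h z‖ + ‖g z‖ ≤ 1)
    (hb0 : b 0 = 0) :
    ∀ r : ℝ, 0 ≤ r → r ≤ 1 / 3 →
      ‖a 0‖ + (∑' k : ℕ, (‖a (k + 1)‖ + ‖b (k + 1)‖) * r ^ (k + 1)) ≤ 1 := by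
  intro r hr0 hr13
  -- ‖a 0‖ ≤ 1
  have hh0 : h 0 = a 0 := by
    have h1 : HasSum (fun n => a n * (0:ℂ) ^ n) (a 0) := by
      have := hasSum_single (f := fun n => a n * (0:ℂ) ^ n) 0
        (fun m hm => by simp [zero_pow hm])
      simpa using this
    exact (hh 0 (by norm_num)).unique h1
  have ha0 : ‖a 0‖ ≤ 1 := by
    have := hbound 0 (by norm_num)
    rw [hh0] at this
    nlinarith [norm_nonneg (g 0)]
  -- coefficient bound
  have hcoeff : ∀ k : ℕ, 1 ≤ k → ‖a k‖ + ‖b k‖ ≤ 1 - ‖a 0‖ ^ 2 := by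
    intro k hk
    obtain ⟨lam, hlam1, hlam2⟩ : ∃ lam : ℂ, ‖lam‖ ≤ 1 ∧ ‖a k‖ + ‖b k‖ ≤ ‖a k + lam * b k‖ := by
      by_cases hbk : b k = 0
      · exact ⟨1, by norm_num, by simp [hbk]⟩
      by_cases hak : a k = 0
      · refine ⟨(‖b k‖ : ℂ) / b k, ?_, ?_⟩
        · rw [norm_div, Complex.norm_real, Real.norm_eq_abs, abs_of_nonneg (norm_nonneg _),
            div_self (norm_ne_zero_iff.mpr hbk)]
        · rw [hak, zero_add, norm_zero, zero_add, div_mul_cancel₀ _ hbk, Complex.norm_real,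
            Real.norm_eq_abs, abs_of_nonneg (norm_nonneg _)]
      · have ha' : ‖a k‖ ≠ 0 := norm_ne_zero_iff.mpr hak
        have hb' : ‖b k‖ ≠ 0 := norm_ne_zero_iff.mpr hbk
        refine ⟨(a k * (‖b k‖ : ℂ)) / (b k * (‖a k‖ : ℂ)), ?_, ?_⟩
        · rw [norm_div, norm_mul, norm_mul, Complex.norm_real, Complex.norm_real,
            Real.norm_eq_abs, Real.norm_eq_abs, abs_of_nonneg (norm_nonneg _),
            abs_of_nonneg (norm_nonneg _), mul_comm ‖b k‖ ‖a k‖,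
            div_self (mul_ne_zero ha' hb')]
        · have hakn : (‖a k‖ : ℂ) ≠ 0 := by
            simpa using norm_ne_zero_iff.mpr hak
          have heq : a k + (a k * (‖b k‖ : ℂ)) / (b k * (‖a k‖ : ℂ)) * b k
              = a k * ((‖a k‖ : ℂ) + (‖b k‖ : ℂ)) / (‖a k‖ : ℂ) := by
            have h1 : (a k * (‖b k‖ : ℂ)) / (b k * (‖a k‖ : ℂ)) * b k
                = a k * (‖b k‖ : ℂ) / (‖a k‖ : ℂ) := by
              rw [div_mul_eq_mul_div, mul_comm (b k) ((‖a k‖ : ℂ)),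
                mul_div_mul_right _ _ hbk]
            rw [h1, mul_add, mul_comm, add_div, mul_div_assoc, mul_div_assoc,
              div_self hakn, mul_one, mul_comm]
          rw [heq, norm_div, norm_mul]
          rw [show ((‖a k‖ : ℂ) + (‖b k‖ : ℂ)) = ((‖a k‖ + ‖b k‖ : ℝ) : ℂ) by push_cast; ring]
          rw [Complex.norm_real, Complex.norm_real, Real.norm_eq_abs, Real.norm_eq_abs,
            abs_of_nonneg (by positivity), abs_of_nonneg (norm_nonneg _)]
          rw [mul_comm, mul_div_assoc, div_self (norm_ne_zero_iff.mpr hak), mul_one]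
    have hc : ∀ z : ℂ, ‖z‖ < 1 →
        HasSum (fun n => (a n + lam * b n) * z ^ n) (h z + lam * g z) := by
      intro z hz
      have := (hh z hz).add ((hg z hz).mul_left lam)
      refine this.congr_fun fun n => ?_
      ring
    have hF : ∀ z : ℂ, ‖z‖ < 1 → ‖h z + lam * g z‖ ≤ 1 := by
      intro z hz
      calc ‖h z + lam * g z‖ ≤ ‖h z‖ + ‖lam * g z‖ := norm_add_le _ _
        _ ≤ ‖h z‖ + ‖g z‖ := by
            rw [norm_mul]
            nlinarith [norm_nonneg (g z)]
        _ ≤ 1 := hbound z hz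
    have := coeff_bound (fun n => a n + lam * b n) (fun z => h z + lam * g z) hc hF k hk
    simp only [hb0, mul_zero, add_zero] at this
    exact le_trans hlam2 this
  -- final summation
  set t : ℝ := ‖a 0‖ with htdef
  have ht0 : 0 ≤ t := norm_nonneg _
  have hr1 : r < 1 := by linarith
  have hgeom : Summable (fun k : ℕ => (1 - t ^ 2) * r ^ (k + 1)) := by
    have := (summable_geometric_of_lt_one hr0 hr1).mul_left ((1 - t ^ 2) * r)
    refine this.congr fun k => ?_
    rw [pow_succ]
    ring
  have hterm : ∀ k : ℕ, (‖a (k + 1)‖ + ‖b (k + 1)‖) * r ^ (k + 1)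
      ≤ (1 - t ^ 2) * r ^ (k + 1) := fun k =>
    mul_le_mul_of_nonneg_right (hcoeff (k + 1) (by omega)) (by positivity)
  have hsummable : Summable (fun k : ℕ => (‖a (k + 1)‖ + ‖b (k + 1)‖) * r ^ (k + 1)) := by
    refine Summable.of_nonneg_of_le (fun k => by positivity) hterm hgeom
  have htsum : (∑' k : ℕ, (‖a (k + 1)‖ + ‖b (k + 1)‖) * r ^ (k + 1))
      ≤ ∑' k : ℕ, (1 - t ^ 2) * r ^ (k + 1) := Summable.tsum_le_tsum hterm hsummable hgeom
  have hgeomval : (∑' k : ℕ, (1 - t ^ 2) * r ^ (k + 1)) = (1 - t ^ 2) * r * (1 - r)⁻¹ := by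
    rw [show (fun k : ℕ => (1 - t ^ 2) * r ^ (k + 1)) = fun k : ℕ => (1 - t ^ 2) * r * r ^ k by
      funext k; rw [pow_succ]; ring]
    rw [tsum_mul_left, tsum_geometric_of_lt_one hr0 hr1]
  have hfinal : t + (1 - t ^ 2) * r * (1 - r)⁻¹ ≤ 1 := by
    have h2 : (1 - t ^ 2) * r * (1 - r)⁻¹ ≤ 1 - t := by
      rw [← div_eq_mul_inv, div_le_iff₀ (by linarith : (0:ℝ) < 1 - r)]
      nlinarith [mul_le_mul hr13 ha0 ht0 (by norm_num : (0:ℝ) ≤ 1/3),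
        mul_nonneg (sub_nonneg.mpr ha0) hr0]
    linarith
  calc ‖a 0‖ + (∑' k : ℕ, (‖a (k + 1)‖ + ‖b (k + 1)‖) * r ^ (k + 1))
      ≤ t + (1 - t ^ 2) * r * (1 - r)⁻¹ := by
        rw [htdef]
        exact add_le_add_right (le_trans htsum (le_of_eq hgeomval)) _
    _ ≤ 1 := hfinal
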